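/- A kG-module P is weakly projective if and only if it is weakly injective; that is, Hom_{kG}(P,−) preserves exactness of k-split exact sequences if and only if Hom_{kG}(−,P) does. -/

import Mathlib

open Finset

universe u

section Prelude

variable {k G : Type u} [CommRing k] [Group G] [Fintype G]
variable {M N : Type u} [AddCommGroup M] [Module k M] [AddCommGroup N] [Module k N]

/-- The trace map `Tr_G(θ)(m) = ∑ g, g • θ(g⁻¹ • m)`. -/
noncomputable def traceMap (ρM : Representation k G M) (ρN : Representation k G N)
    (θ : M →ₗ[k] N) : M →ₗ[k] N :=
  ∑ g : G, (ρN g) ∘ₗ θ ∘ₗ (ρM g⁻¹)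

/-- `f` is a `kG`-module homomorphism, i.e. a `G`-equivariant `k`-linear map. -/
def IsGEquiv (ρM : Representation k G M) (ρN : Representation k G N)
    (f : M →ₗ[k] N) : Prop :=
  ∀ g : G, f ∘ₗ (ρM g) = (ρN g) ∘ₗ f

/-- The induced module `M↑G = kG ⊗ₖ M`, modelled as `G →₀ M`, where `h • (g ⊗ m) = hg ⊗ m`. -/
noncomputable def ind (k G M : Type u) [CommRing k] [Group G] [AddCommGroup M] [Module k M] :
    Representation k G (G →₀ M) where
  toFun h := Finsupp.lmapDomain M k (fun x => h * x)
  map_one' := by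
    refine LinearMap.ext fun f => ?_
    show Finsupp.mapDomain (fun x => (1:G) * x) f = f
    simp only [one_mul]
    exact Finsupp.mapDomain_id
  map_mul' h₁ h₂ := by
    refine LinearMap.ext fun f => ?_
    simp only [Finsupp.lmapDomain_apply, Module.End.mul_apply]
    rw [show (fun x => h₁ * h₂ * x) = (fun x => h₁ * x) ∘ (fun x => h₂ * x) by
      funext x; simp [mul_assoc]]
    exact Finsupp.mapDomain_comp

/-- The natural map `ι_M : M → M↑G`, `m ↦ ∑ g, g ⊗ g⁻¹m`. -/
noncomputable def indI (ρM : Representation k G M) : M →ₗ[k] (G →₀ M) :=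
  ∑ g : G, (Finsupp.lsingle g) ∘ₗ (ρM g⁻¹)

/-- The natural map `π_M : M↑G → M`, `g ⊗ m ↦ g·m`. -/
noncomputable def indP (ρM : Representation k G M) : (G →₀ M) →ₗ[k] M :=
  Finsupp.lsum k fun g => (ρM g : M →ₗ[k] M)

end Prelude

section WeakDefs

variable {k G : Type u} [CommRing k] [Group G] [Fintype G]

/-- A `kG`-module `P` is weakly projective if every `kG`-homomorphism out of `P`
lifts along any `k`-split epimorphism of `kG`-modules. -/
def WeaklyProjective {P : Type u} [AddCommGroup P] [Module k P]
    (ρP : Representation k G P) : Prop :=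
  ∀ (M N : Type u) [AddCommGroup M] [Module k M] [AddCommGroup N] [Module k N]
    (ρM : Representation k G M) (ρN : Representation k G N) (π : M →ₗ[k] N),
    IsGEquiv ρM ρN π → (∃ s : N →ₗ[k] M, π ∘ₗ s = LinearMap.id) →
    ∀ f : P →ₗ[k] N, IsGEquiv ρP ρN f →
      ∃ fl : P →ₗ[k] M, IsGEquiv ρP ρM fl ∧ π ∘ₗ fl = f

/-- A `kG`-module `P` is weakly injective if every `kG`-homomorphism into `P`
extends along any `k`-split monomorphism of `kG`-modules. -/
def WeaklyInjective {P : Type u} [AddCommGroup P] [Module k P]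
    (ρP : Representation k G P) : Prop :=
  ∀ (L M : Type u) [AddCommGroup L] [Module k L] [AddCommGroup M] [Module k M]
    (ρL : Representation k G L) (ρM : Representation k G M) (ι : L →ₗ[k] M),
    IsGEquiv ρL ρM ι → (∃ r : M →ₗ[k] L, r ∘ₗ ι = LinearMap.id) →
    ∀ f : L →ₗ[k] P, IsGEquiv ρL ρP f →
      ∃ fe : M →ₗ[k] P, IsGEquiv ρM ρP fe ∧ fe ∘ₗ ι = f

end WeakDefs

section AuxTrace

variable {k G : Type u} [CommRing k] [Group G] [Fintype G]
variable {M N : Type u} [AddCommGroup M] [Module k M] [AddCommGroup N] [Module k N]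

lemma traceMap_apply (ρM : Representation k G M) (ρN : Representation k G N)
    (θ : M →ₗ[k] N) (m : M) :
    traceMap ρM ρN θ m = ∑ g : G, ρN g (θ (ρM g⁻¹ m)) := by
  simp [traceMap]

lemma traceMap_isGEquiv (ρM : Representation k G M) (ρN : Representation k G N)
    (θ : M →ₗ[k] N) : IsGEquiv ρM ρN (traceMap ρM ρN θ) := by
  intro h
  ext m
  simp only [LinearMap.comp_apply, traceMap_apply, map_sum]
  refine (Fintype.sum_equiv (Equiv.mulLeft h)
    (fun g => ρN h (ρN g (θ (ρM g⁻¹ m))))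
    (fun g => ρN g (θ (ρM g⁻¹ (ρM h m)))) fun g => ?_).symm
  have h1 : ρN (h * g) = ρN h * ρN g := map_mul _ _ _
  have h2 : ρM (h * g)⁻¹ * ρM h = ρM g⁻¹ := by
    rw [← map_mul]; congr 1; group
  calc ρN h (ρN g (θ (ρM g⁻¹ m)))
      = ρN (h * g) (θ (ρM g⁻¹ m)) := by rw [h1]; rfl
    _ = ρN (Equiv.mulLeft h g) (θ (ρM (Equiv.mulLeft h g)⁻¹ (ρM h m))) := by
        rw [show ρM g⁻¹ m = ρM (h * g)⁻¹ (ρM h m) from by rw [← h2]; rfl]; rfl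

lemma indP_isGEquiv (ρM : Representation k G M) :
    IsGEquiv (ind k G M) ρM (indP ρM) := by
  intro h
  refine Finsupp.lhom_ext fun g m => ?_
  simp only [LinearMap.comp_apply]
  have : (ind k G M) h (Finsupp.single g m) = Finsupp.single (h * g) m := by
    show Finsupp.mapDomain (fun x => h * x) (Finsupp.single g m) = _
    rw [Finsupp.mapDomain_single]
  rw [this]
  simp only [indP, Finsupp.lsum_apply, Finsupp.sum_single_index, map_zero]
  rw [map_mul]; rfl

lemma indI_isGEquiv (ρM : Representation k G M) :
    IsGEquiv ρM (ind k G M) (indI ρM) := by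
  intro h
  refine LinearMap.ext fun m => ?_
  simp only [LinearMap.comp_apply, indI, LinearMap.sum_apply, map_sum,
    Finsupp.lsingle_apply]
  refine Fintype.sum_equiv (Equiv.mulLeft h⁻¹) _ _ fun g => ?_
  show Finsupp.single g (ρM g⁻¹ ((ρM h) m)) =
    (ind k G M) h (Finsupp.single (h⁻¹ * g) (ρM (h⁻¹ * g)⁻¹ m))
  show _ = Finsupp.mapDomain (fun x => h * x)
    (Finsupp.single (h⁻¹ * g) (ρM (h⁻¹ * g)⁻¹ m))
  rw [Finsupp.mapDomain_single]
  congr 1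
  · group
  · rw [mul_inv_rev, inv_inv, map_mul]; rfl

/-- Higman's criterion -/
def HasTraceOne {P : Type u} [AddCommGroup P] [Module k P]
    (ρP : Representation k G P) : Prop :=
  ∃ θ : P →ₗ[k] P, traceMap ρP ρP θ = LinearMap.id

lemma weaklyProjective_of_trace {P : Type u} [AddCommGroup P] [Module k P]
    {ρP : Representation k G P} (h : HasTraceOne ρP) : WeaklyProjective ρP := by
  obtain ⟨θ, hθ⟩ := h
  intro M N _ _ _ _ ρM ρN π hπ hsplit f hf
  obtain ⟨s, hs⟩ := hsplit
  refine ⟨traceMap ρP ρM (s ∘ₗ f ∘ₗ θ), traceMap_isGEquiv _ _ _, ?_⟩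
  ext p
  simp only [LinearMap.comp_apply, traceMap_apply, LinearMap.id_apply, map_sum]
  have step : ∀ g : G, π (ρM g (s (f (θ (ρP g⁻¹ p))))) = f (ρP g (θ (ρP g⁻¹ p))) := by
    intro g
    have h1 := LinearMap.congr_fun (hπ g) (s (f (θ (ρP g⁻¹ p))))
    have h2 := LinearMap.congr_fun hs (f (θ (ρP g⁻¹ p)))
    have h3 := LinearMap.congr_fun (hf g) (θ (ρP g⁻¹ p))
    simp only [LinearMap.comp_apply, LinearMap.id_apply] at h1 h2 h3
    rw [h1, h2, ← h3]
  calc ∑ g : G, π (ρM g (s (f (θ (ρP g⁻¹ p)))))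
      = ∑ g : G, f (ρP g (θ (ρP g⁻¹ p))) := Finset.sum_congr rfl fun g _ => step g
    _ = f (traceMap ρP ρP θ p) := by rw [traceMap_apply, map_sum]
    _ = f p := by rw [hθ]; rfl

lemma weaklyInjective_of_trace {P : Type u} [AddCommGroup P] [Module k P]
    {ρP : Representation k G P} (h : HasTraceOne ρP) : WeaklyInjective ρP := by
  obtain ⟨θ, hθ⟩ := h
  intro L M _ _ _ _ ρL ρM ι hι hsplit f hf
  obtain ⟨r, hr⟩ := hsplit
  refine ⟨traceMap ρM ρP (θ ∘ₗ f ∘ₗ r), traceMap_isGEquiv _ _ _, ?_⟩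
  ext l
  simp only [LinearMap.comp_apply, traceMap_apply]
  have step : ∀ g : G, ρP g (θ (f (r (ρM g⁻¹ (ι l))))) = ρP g (θ (ρP g⁻¹ (f l))) := by
    intro g
    have h1 := LinearMap.congr_fun (hι g⁻¹) l
    have h3 := LinearMap.congr_fun (hf g⁻¹) l
    simp only [LinearMap.comp_apply] at h1 h3
    rw [← h1]
    have h2 := LinearMap.congr_fun hr (ρL g⁻¹ l)
    simp only [LinearMap.comp_apply, LinearMap.id_apply] at h2
    rw [h2, h3]
  calc ∑ g : G, ρP g (θ (f (r (ρM g⁻¹ (ι l)))))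
      = ∑ g : G, ρP g (θ (ρP g⁻¹ (f l))) := Finset.sum_congr rfl fun g _ => step g
    _ = traceMap ρP ρP θ (f l) := (traceMap_apply _ _ _ _).symm
    _ = f l := by rw [hθ]; rfl

lemma trace_of_weaklyProjective {P : Type u} [AddCommGroup P] [Module k P]
    {ρP : Representation k G P} (h : WeaklyProjective ρP) : HasTraceOne ρP := by
  have hid : IsGEquiv ρP ρP (LinearMap.id : P →ₗ[k] P) := fun g => by
    rw [LinearMap.id_comp, LinearMap.comp_id]
  have hsec : (indP ρP) ∘ₗ (Finsupp.lsingle (1:G)) = LinearMap.id := by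
    ext p
    simp [indP, Finsupp.lsum_apply, Finsupp.sum_single_index]
  obtain ⟨fl, hfl, hcomp⟩ := h (G →₀ P) P (ind k G P) ρP (indP ρP)
    (indP_isGEquiv ρP) ⟨Finsupp.lsingle (1:G), hsec⟩ LinearMap.id hid
  refine ⟨(Finsupp.lapply (1:G)) ∘ₗ fl, ?_⟩
  ext p
  simp only [traceMap_apply, LinearMap.comp_apply, LinearMap.id_apply, Finsupp.lapply_apply]
  have key : ∀ g : G, (fl (ρP g⁻¹ p)) (1:G) = (fl p) g := by
    intro g
    have h1 := LinearMap.congr_fun (hfl g⁻¹) p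
    simp only [LinearMap.comp_apply] at h1
    rw [h1]
    show (Finsupp.mapDomain (fun x => g⁻¹ * x) (fl p)) (1:G) = (fl p) g
    rw [show (1:G) = g⁻¹ * g by group]
    exact Finsupp.mapDomain_apply (mul_right_injective g⁻¹) _ g
  calc ∑ g : G, ρP g ((fl (ρP g⁻¹ p)) 1)
      = ∑ g : G, ρP g ((fl p) g) := Finset.sum_congr rfl fun g _ => by rw [key g]
    _ = indP ρP (fl p) := by
        show _ = Finsupp.sum (fl p) fun g m => ρP g m
        rw [Finsupp.sum_fintype]
        intro g; exact map_zero _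
    _ = p := LinearMap.congr_fun hcomp p

lemma trace_of_weaklyInjective {P : Type u} [AddCommGroup P] [Module k P]
    {ρP : Representation k G P} (h : WeaklyInjective ρP) : HasTraceOne ρP := by
  have hid : IsGEquiv ρP ρP (LinearMap.id : P →ₗ[k] P) := fun g => by
    rw [LinearMap.id_comp, LinearMap.comp_id]
  have hret : (Finsupp.lapply (1:G)) ∘ₗ (indI ρP) = (LinearMap.id : P →ₗ[k] P) := by
    ext p
    simp only [LinearMap.comp_apply, Finsupp.lapply_apply, LinearMap.id_apply, indI,
      LinearMap.sum_apply, Finsupp.lsingle_apply, Finsupp.finset_sum_apply]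
    rw [Finset.sum_eq_single (1:G)]
    · simp
    · intro g _ hg; rw [Finsupp.single_apply_eq_zero.mpr]; tauto
    · intro hg; exact absurd (Finset.mem_univ _) hg
  obtain ⟨fe, hfe, hcomp⟩ := h P (G →₀ P) ρP (ind k G P) (indI ρP)
    (indI_isGEquiv ρP) ⟨Finsupp.lapply (1:G), hret⟩ LinearMap.id hid
  refine ⟨fe ∘ₗ Finsupp.lsingle (1:G), ?_⟩
  ext p
  simp only [traceMap_apply, LinearMap.comp_apply, LinearMap.id_apply, Finsupp.lsingle_apply]
  have key : ∀ g : G, ρP g (fe (Finsupp.single (1:G) (ρP g⁻¹ p)))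
      = fe (Finsupp.single g (ρP g⁻¹ p)) := by
    intro g
    have h1 := LinearMap.congr_fun (hfe g) (Finsupp.single (1:G) (ρP g⁻¹ p))
    simp only [LinearMap.comp_apply] at h1
    rw [← h1]
    congr 1
    show Finsupp.mapDomain (fun x => g * x) (Finsupp.single (1:G) (ρP g⁻¹ p)) = _
    rw [Finsupp.mapDomain_single, mul_one]
  calc ∑ g : G, ρP g (fe (Finsupp.single (1:G) (ρP g⁻¹ p)))
      = ∑ g : G, fe (Finsupp.single g (ρP g⁻¹ p)) :=
        Finset.sum_congr rfl fun g _ => key g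
    _ = fe (indI ρP p) := by
        rw [← map_sum]
        congr 1
        simp [indI, LinearMap.sum_apply]
    _ = p := LinearMap.congr_fun hcomp p

end AuxTrace

/-- `P` is weakly projective iff `P` is weakly injective. -/
theorem weaklyProjective_iff_weaklyInjective
    {k G : Type u} [CommRing k] [Group G] [Fintype G]
    {P : Type u} [AddCommGroup P] [Module k P] (ρP : Representation k G P) :
    WeaklyProjective ρP ↔ WeaklyInjective ρP :=
  ⟨fun h => weaklyInjective_of_trace (trace_of_weaklyProjective h),
   fun h => weaklyProjective_of_trace (trace_of_weaklyInjective h)⟩
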